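/- arXiv:1901.00165 — 3 statements merged into one kernel-verified Lean document; each statement's English description precedes it below -/
import Mathlib

section
/- The function t ↦ ∫_Ω Φ(t|g|) dμ is differentiable at every t > 0, with derivative equal to ∫_Ω φ(t|g(x)|)·|g(x)| dμ(x). -/
open MeasureTheory Set Filter Topology Real

/-- Under hypotheses (φ0)–(φ1), for a measurable `g` with
`∫ Φ(|g|) dμ < ∞`, the function `t ↦ ∫ Φ(t|g|) dμ` is differentiable at every
`t > 0`, with derivative `∫ φ(t|g x|)·|g x| dμ(x)`.  Here `Φ t = ∫ s in 0..|t|, φ s`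
and `a₋, a₊` are written `am, ap`. -/
theorem hasDerivAt_integral_Phi_mul_abs
    {Ω : Type*} [MeasurableSpace Ω] (μ : Measure Ω)
    (φ φ' : ℝ → ℝ) (am ap : ℝ)
    (hodd : ∀ t : ℝ, φ (-t) = -φ t)
    (hmono : StrictMono φ)
    (hcont : Continuous φ)
    (hsurj : Function.Surjective φ)
    (hpos : ∀ t : ℝ, 0 < t → 0 < φ t)
    (hderiv : ∀ t : ℝ, 0 < t → HasDerivAt φ (φ' t) t)
    (ham : 0 < am) (hamap : am ≤ ap)
    (hratio : ∀ t : ℝ, 0 < t → am ≤ t * φ' t / φ t ∧ t * φ' t / φ t ≤ ap)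
    (Φ : ℝ → ℝ) (hΦ : ∀ t : ℝ, Φ t = ∫ s in (0:ℝ)..|t|, φ s)
    (g : Ω → ℝ) (hg : Measurable g)
    (hgint : Integrable (fun x => Φ |g x|) μ) :
    ∀ t : ℝ, 0 < t →
      HasDerivAt (fun τ : ℝ => ∫ x, Φ (τ * |g x|) ∂μ)
        (∫ x, φ (t * |g x|) * |g x| ∂μ) t := by
  have hap : 0 < ap := lt_of_lt_of_le ham hamap
  have hap1 : (0:ℝ) < ap + 1 := by linarith
  have hφ0 : φ 0 = 0 := by have h := hodd 0; simp only [neg_zero] at h; linarith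
  have hφnonneg : ∀ s : ℝ, 0 ≤ s → 0 ≤ φ s := by
    intro s hs
    rcases hs.eq_or_lt with h | h
    · simp [← h, hφ0]
    · exact (hpos s h).le
  have hii : ∀ a b : ℝ, IntervalIntegrable φ volume a b := fun a b =>
    hcont.intervalIntegrable a b
  have hGder : ∀ u : ℝ, HasDerivAt (fun v => ∫ s in (0:ℝ)..v, φ s) (φ u) u := fun u =>
    intervalIntegral.integral_hasDerivAt_right (hii 0 u)
      hcont.stronglyMeasurable.stronglyMeasurableAtFilter hcont.continuousAt
  have hΦcont : Continuous Φ := by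
    have hGcont : Continuous (fun v => ∫ s in (0:ℝ)..v, φ s) :=
      Differentiable.continuous (fun v => (hGder v).differentiableAt)
    have : Φ = (fun v => ∫ s in (0:ℝ)..v, φ s) ∘ (fun u : ℝ => |u|) := funext fun u => hΦ u
    rw [this]
    exact hGcont.comp continuous_abs
  have hΦder : ∀ u : ℝ, 0 < u → HasDerivAt Φ (φ u) u := by
    intro u hu
    apply (hGder u).congr_of_eventuallyEq
    filter_upwards [lt_mem_nhds hu] with v hv
    rw [hΦ, abs_of_pos hv]
  have hΦ0 : Φ 0 = 0 := by rw [hΦ]; simp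
  have hΦnonneg : ∀ u : ℝ, 0 ≤ Φ u := by
    intro u
    rw [hΦ]
    exact intervalIntegral.integral_nonneg (abs_nonneg u) fun s hs => hφnonneg s hs.1
  have hΦmono : ∀ u v : ℝ, 0 ≤ u → u ≤ v → Φ u ≤ Φ v := by
    intro u v hu huv
    rw [hΦ, hΦ, abs_of_nonneg hu, abs_of_nonneg (hu.trans huv),
      ← intervalIntegral.integral_add_adjacent_intervals (hii 0 u) (hii u v)]
    have h0 : 0 ≤ ∫ s in u..v, φ s :=
      intervalIntegral.integral_nonneg huv fun s hs => hφnonneg s (hu.trans hs.1)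
    linarith
  have hkey : ∀ w : ℝ, 0 < w → w * φ' w ≤ ap * φ w := by
    intro w hw
    have h := (hratio w hw).2
    have hpw := hpos w hw
    have := mul_le_mul_of_nonneg_right h hpw.le
    rw [div_mul_cancel₀ _ (ne_of_gt hpw)] at this
    exact this
  -- φ v / v^ap is antitone on (0, ∞)
  have hanti : ∀ u v : ℝ, 0 < u → u ≤ v → φ v * u ^ ap ≤ φ u * v ^ ap := by
    intro u v hu huv
    have hv : 0 < v := hu.trans_le huv
    have hψd : ∀ w : ℝ, 0 < w → HasDerivAt (fun w => φ w * w ^ (-ap))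
        (φ' w * w ^ (-ap) + φ w * (-ap * w ^ (-ap - 1))) w := by
      intro w hw
      exact (hderiv w hw).mul (Real.hasDerivAt_rpow_const (Or.inl hw.ne'))
    have hmain : AntitoneOn (fun w => φ w * w ^ (-ap)) (Icc u v) := by
      apply antitoneOn_of_deriv_nonpos (convex_Icc u v)
      · apply hcont.continuousOn.mul
        intro w hw
        exact (Real.continuousAt_rpow_const w (-ap)
          (Or.inl (ne_of_gt (hu.trans_le hw.1)))).continuousWithinAt
      · intro w hw
        rw [interior_Icc] at hw
        exact (hψd w (hu.trans hw.1)).differentiableAt.differentiableWithinAt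
      · intro w hw
        rw [interior_Icc] at hw
        have hw0 : 0 < w := hu.trans hw.1
        rw [(hψd w hw0).deriv]
        have h1 : w ^ (-ap) = w ^ (-ap - 1) * w := by
          rw [← Real.rpow_add_one hw0.ne' (-ap - 1)]
          ring_nf
        have h2 : φ' w * w ^ (-ap) + φ w * (-ap * w ^ (-ap - 1))
            = w ^ (-ap - 1) * (w * φ' w - ap * φ w) := by
          rw [h1]; ring
        rw [h2]
        exact mul_nonpos_of_nonneg_of_nonpos (Real.rpow_nonneg hw0.le _)
          (by linarith [hkey w hw0])
    have h := hmain (left_mem_Icc.2 huv) (right_mem_Icc.2 huv) huv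
    simp only [Real.rpow_neg hu.le, Real.rpow_neg hv.le] at h
    have hup : (0:ℝ) < u ^ ap := Real.rpow_pos_of_pos hu ap
    have hvp : (0:ℝ) < v ^ ap := Real.rpow_pos_of_pos hv ap
    have h' : φ v / v ^ ap ≤ φ u / u ^ ap := by
      rw [div_eq_mul_inv, div_eq_mul_inv]; exact h
    exact (div_le_div_iff₀ hvp hup).1 h'
  have hA : ∀ s c : ℝ, 0 < s → 1 ≤ c → φ (c * s) ≤ c ^ ap * φ s := by
    intro s c hs hc
    have hc0 : (0:ℝ) < c := lt_of_lt_of_le one_pos hc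
    have hcs : s ≤ c * s := le_mul_of_one_le_left hs.le hc
    have h := hanti s (c * s) hs hcs
    rw [Real.mul_rpow hc0.le hs.le] at h
    have hsp : (0:ℝ) < s ^ ap := Real.rpow_pos_of_pos hs ap
    have h' : φ (c * s) * s ^ ap ≤ c ^ ap * φ s * s ^ ap := by
      calc φ (c * s) * s ^ ap ≤ φ s * (c ^ ap * s ^ ap) := h
      _ = c ^ ap * φ s * s ^ ap := by ring
    exact le_of_mul_le_mul_right h' hsp
  have hB : ∀ s : ℝ, 0 < s → s * φ s ≤ (ap + 1) * Φ s := by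
    intro s hs
    rw [hΦ, abs_of_pos hs]
    have hsp : (0:ℝ) < s ^ ap := Real.rpow_pos_of_pos hs ap
    have hlow : ∀ u ∈ Icc (0:ℝ) s, φ s * s ^ (-ap) * u ^ ap ≤ φ u := by
      intro u hu
      rcases hu.1.eq_or_lt with h0 | h0
      · rw [← h0, Real.zero_rpow (ne_of_gt hap)]
        simp [hφ0]
      · have h := hanti u s h0 hu.2
        have heq : φ s * s ^ (-ap) * u ^ ap = φ s * u ^ ap / s ^ ap := by
          rw [Real.rpow_neg hs.le]; ring
        rw [heq, div_le_iff₀ hsp]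
        linarith
    have hcont2 : Continuous (fun u : ℝ => φ s * s ^ (-ap) * u ^ ap) := by
      apply continuous_const.mul
      exact continuous_iff_continuousAt.2 fun x =>
        Real.continuousAt_rpow_const x ap (Or.inr hap.le)
    have hmono2 := intervalIntegral.integral_mono_on hs.le
      (hcont2.intervalIntegrable 0 s) (hii 0 s) hlow
    rw [intervalIntegral.integral_const_mul,
      integral_rpow (Or.inl (by linarith : (-1:ℝ) < ap)),
      Real.zero_rpow (ne_of_gt hap1), sub_zero] at hmono2
    have hss : s ^ (-ap) * s ^ (ap + 1) = s := by
      rw [← Real.rpow_add hs]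
      norm_num
    have heq2 : φ s * s ^ (-ap) * (s ^ (ap + 1) / (ap + 1)) = s * φ s / (ap + 1) := by
      have h3 : φ s * s ^ (-ap) * (s ^ (ap + 1) / (ap + 1))
          = φ s * (s ^ (-ap) * s ^ (ap + 1)) / (ap + 1) := by ring
      rw [h3, hss]; ring
    rw [heq2, div_le_iff₀ hap1] at hmono2
    linarith [hmono2]
  have hC : ∀ s c : ℝ, 0 ≤ s → 1 ≤ c → Φ (c * s) ≤ c ^ (ap + 1) * Φ s := by
    intro s c hs hc
    have hc0 : (0:ℝ) < c := lt_of_lt_of_le one_pos hc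
    rcases hs.eq_or_lt with h0 | h0
    · rw [← h0, mul_zero, hΦ0, mul_zero]
    · rw [hΦ, hΦ, abs_of_pos (mul_pos hc0 h0), abs_of_pos h0]
      have hsub := intervalIntegral.smul_integral_comp_mul_left (f := φ) (a := (0:ℝ)) (b := s) c
      rw [mul_zero] at hsub
      rw [← hsub]
      have hint1 : IntervalIntegrable (fun x => φ (c * x)) volume 0 s :=
        (hcont.comp (continuous_const.mul continuous_id)).intervalIntegrable 0 s
      have hmono3 : ∫ x in (0:ℝ)..s, φ (c * x) ≤ ∫ x in (0:ℝ)..s, c ^ ap * φ x := by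
        apply intervalIntegral.integral_mono_on h0.le hint1
          ((continuous_const.mul hcont).intervalIntegrable 0 s)
        intro u hu
        rcases hu.1.eq_or_lt with h1 | h1
        · simp [← h1, hφ0]
        · exact hA u c h1 hc
      rw [intervalIntegral.integral_const_mul] at hmono3
      have hcc : c ^ (ap + 1) = c * c ^ ap := by
        rw [Real.rpow_add hc0, Real.rpow_one]; ring
      rw [smul_eq_mul, hcc]
      calc c * ∫ x in (0:ℝ)..s, φ (c * x) ≤ c * (c ^ ap * ∫ x in (0:ℝ)..s, φ x) :=
          mul_le_mul_of_nonneg_left hmono3 hc0.le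
      _ = c * c ^ ap * ∫ x in (0:ℝ)..s, φ x := by ring
  have hCC : ∀ s c : ℝ, 0 ≤ s → 0 < c → Φ (c * s) ≤ max (c ^ (ap + 1)) 1 * Φ s := by
    intro s c hs hc
    rcases le_or_gt 1 c with h1 | h1
    · exact (hC s c hs h1).trans
        (mul_le_mul_of_nonneg_right (le_max_left _ _) (hΦnonneg s))
    · have hle : Φ (c * s) ≤ Φ s := hΦmono _ _ (mul_nonneg hc.le hs) (by nlinarith)
      calc Φ (c * s) ≤ Φ s := hle
      _ = 1 * Φ s := (one_mul _).symm
      _ ≤ max (c ^ (ap + 1)) 1 * Φ s :=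
          mul_le_mul_of_nonneg_right (le_max_right _ _) (hΦnonneg s)
  intro t ht
  have h2t : (0:ℝ) < 2 * t := by linarith
  set K : ℝ := (ap + 1) / (2 * t) * max ((2 * t) ^ (ap + 1)) 1 with hK
  have hmeasΦ : ∀ τ : ℝ, AEStronglyMeasurable (fun x => Φ (τ * |g x|)) μ := fun τ =>
    (((hΦcont.comp (continuous_const.mul continuous_abs)).measurable).comp hg).aestronglyMeasurable
  have hF'meas : AEStronglyMeasurable (fun x => φ (t * |g x|) * |g x|) μ :=
    ((hcont.measurable.comp (measurable_const.mul hg.abs)).mul hg.abs).aestronglyMeasurable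
  have hFint : Integrable (fun x => Φ (t * |g x|)) μ := by
    apply Integrable.mono (hgint.const_mul (max (t ^ (ap + 1)) 1)) (hmeasΦ t)
    filter_upwards with x
    rw [Real.norm_eq_abs, Real.norm_eq_abs, abs_of_nonneg (hΦnonneg _)]
    have h1 := hCC (|g x|) t (abs_nonneg _) ht
    have h2 : (0:ℝ) ≤ max (t ^ (ap + 1)) 1 * Φ |g x| :=
      mul_nonneg (le_trans zero_le_one (le_max_right _ _)) (hΦnonneg _)
    rw [abs_of_nonneg h2]
    exact h1
  have hbound : ∀ x, ∀ τ ∈ Metric.ball t (t / 2),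
      ‖φ (τ * |g x|) * |g x|‖ ≤ K * Φ |g x| := by
    intro x τ hτ
    rw [Metric.mem_ball, Real.dist_eq, abs_lt] at hτ
    have hτ0 : 0 < τ := by linarith [hτ.1]
    have hτ2t : τ ≤ 2 * t := by linarith [hτ.2]
    have hs0 : (0:ℝ) ≤ |g x| := abs_nonneg _
    rw [Real.norm_eq_abs,
      abs_of_nonneg (mul_nonneg (hφnonneg _ (mul_nonneg hτ0.le hs0)) hs0)]
    rcases hs0.eq_or_lt with h0 | h0
    · rw [← h0]
      simp [hΦ0]
    · have step1 : φ (τ * |g x|) * |g x| ≤ φ (2 * t * |g x|) * |g x| :=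
        mul_le_mul_of_nonneg_right (hmono.monotone (by nlinarith)) hs0
      have step2 : 2 * t * |g x| * φ (2 * t * |g x|) ≤ (ap + 1) * Φ (2 * t * |g x|) :=
        hB _ (by positivity)
      have step3 : Φ (2 * t * |g x|) ≤ max ((2 * t) ^ (ap + 1)) 1 * Φ |g x| := by
        exact hCC (|g x|) (2 * t) hs0 h2t
      calc φ (τ * |g x|) * |g x| ≤ φ (2 * t * |g x|) * |g x| := step1
      _ = 2 * t * |g x| * φ (2 * t * |g x|) / (2 * t) := by field_simp
      _ ≤ (ap + 1) * Φ (2 * t * |g x|) / (2 * t) := by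
          gcongr
      _ = (ap + 1) / (2 * t) * Φ (2 * t * |g x|) := by ring
      _ ≤ (ap + 1) / (2 * t) * (max ((2 * t) ^ (ap + 1)) 1 * Φ |g x|) :=
          mul_le_mul_of_nonneg_left step3 (by positivity)
      _ = K * Φ |g x| := by rw [hK]; ring
  have hdiff : ∀ x, ∀ τ ∈ Metric.ball t (t / 2),
      HasDerivAt (fun τ' => Φ (τ' * |g x|)) (φ (τ * |g x|) * |g x|) τ := by
    intro x τ hτ
    rw [Metric.mem_ball, Real.dist_eq, abs_lt] at hτ
    have hτ0 : 0 < τ := by linarith [hτ.1]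
    rcases (abs_nonneg (g x)).eq_or_lt with h0 | h0
    · simp only [← h0, mul_zero]
      exact hasDerivAt_const τ (Φ 0)
    · have h1 : HasDerivAt Φ (φ (τ * |g x|)) (τ * |g x|) := hΦder _ (by positivity)
      have h2 : HasDerivAt (fun τ' : ℝ => τ' * |g x|) (|g x|) τ := hasDerivAt_mul_const _
      exact h1.comp τ h2
  have hmain := hasDerivAt_integral_of_dominated_loc_of_deriv_le (μ := μ)
    (F := fun τ x => Φ (τ * |g x|)) (F' := fun τ x => φ (τ * |g x|) * |g x|)
    (x₀ := t) (bound := fun x => K * Φ |g x|) (s := Metric.ball t (t / 2))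
    (Metric.ball_mem_nhds t (half_pos ht)) (Eventually.of_forall fun τ => hmeasΦ τ)
    hFint hF'meas (Eventually.of_forall hbound) (hgint.const_mul K)
    (Eventually.of_forall hdiff)
  exact hmain.2
end

section
/- The function σ : (0,∞) → ℝ defined by σ(t) = ∫_Ω Φ(t|g|) dμ + (B/(δ−1))·t^{1−δ} is strictly convex on (0,∞), satisfies σ(t) → ∞ as t → 0⁺ and σ(t) → ∞ as t → ∞, and attains its global minimum over (0,∞) at a unique point t_* > 0 (abstract form of Lemma 4.1 of the paper). -/
open MeasureTheory Set Filter Topology Real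

/-- (Abstract form of Lemma 4.1.)  Under hypotheses (φ0)–(φ1),
for measurable `g` with `0 < ∫ Φ(|g|) dμ < ∞` and constants `B > 0`, `δ > 1`, the
function `σ(t) = ∫ Φ(t|g|) dμ + (B/(δ-1))·t^(1-δ)` is strictly convex on `(0,∞)`,
tends to `∞` as `t → 0⁺` and as `t → ∞`, and attains its global minimum over
`(0,∞)` at a unique point `t⋆ > 0`.  Here `Φ t = ∫ s in 0..|t|, φ s` and
`a₋, a₊` are written `am, ap`. -/
theorem strictConvexOn_tendsto_atTop_and_existsUnique_min_sigma
    {Ω : Type*} [MeasurableSpace Ω] (μ : Measure Ω)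
    (φ φ' : ℝ → ℝ) (am ap : ℝ)
    (hodd : ∀ t : ℝ, φ (-t) = -φ t)
    (hmono : StrictMono φ)
    (hcont : Continuous φ)
    (hsurj : Function.Surjective φ)
    (hpos : ∀ t : ℝ, 0 < t → 0 < φ t)
    (hderiv : ∀ t : ℝ, 0 < t → HasDerivAt φ (φ' t) t)
    (ham : 0 < am) (hamap : am ≤ ap)
    (hratio : ∀ t : ℝ, 0 < t → am ≤ t * φ' t / φ t ∧ t * φ' t / φ t ≤ ap)
    (Φ : ℝ → ℝ) (hΦ : ∀ t : ℝ, Φ t = ∫ s in (0:ℝ)..|t|, φ s)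
    (g : Ω → ℝ) (hg : Measurable g)
    (hgint : Integrable (fun x => Φ |g x|) μ)
    (hgpos : 0 < ∫ x, Φ |g x| ∂μ)
    (B δ : ℝ) (hB : 0 < B) (hδ : 1 < δ)
    (σ : ℝ → ℝ)
    (hσ : ∀ t : ℝ, σ t = (∫ x, Φ (t * |g x|) ∂μ) + (B / (δ - 1)) * t ^ (1 - δ)) :
    StrictConvexOn ℝ (Ioi (0:ℝ)) σ ∧
    Tendsto σ (𝓝[>] (0:ℝ)) atTop ∧
    Tendsto σ atTop atTop ∧
    ∃! tstar : ℝ, 0 < tstar ∧ ∀ t : ℝ, 0 < t → σ tstar ≤ σ t := by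
  have hδ1 : (0:ℝ) < δ - 1 := by linarith
  have hc : 0 < B / (δ - 1) := div_pos hB hδ1
  -- The primitive `H`
  set H : ℝ → ℝ := fun t => ∫ s in (0:ℝ)..t, φ s with hHdef
  have hii : ∀ a b : ℝ, IntervalIntegrable φ volume a b := fun a b =>
    hcont.intervalIntegrable a b
  have hHd : ∀ t : ℝ, HasDerivAt H (φ t) t := fun t =>
    intervalIntegral.integral_hasDerivAt_right (hii 0 t)
      (hcont.aestronglyMeasurable.stronglyMeasurableAtFilter) hcont.continuousAt
  have hHcont : Continuous H := by
    rw [continuous_iff_continuousAt]; exact fun t => (hHd t).continuousAt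
  have hφ0 : φ 0 = 0 := by have h := hodd 0; rw [neg_zero] at h; linarith
  have hH0 : H 0 = 0 := intervalIntegral.integral_same
  have hHeven : ∀ t : ℝ, H (-t) = H t := by
    intro t
    have h1 : (∫ x in (0:ℝ)..t, φ (-x)) = ∫ x in (-t)..(-(0:ℝ)), φ x :=
      intervalIntegral.integral_comp_neg φ
    have h2 : (∫ x in (0:ℝ)..t, φ (-x)) = - H t := by
      simp only [hodd]
      rw [intervalIntegral.integral_neg]
    have h3 : (∫ x in (-t)..(-(0:ℝ)), φ x) = - H (-t) := by
      rw [neg_zero, intervalIntegral.integral_symm]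
    rw [h2, h3] at h1
    linarith
  have hΦeq : ∀ t : ℝ, Φ t = H t := by
    intro t
    rw [hΦ t]
    rcases abs_choice t with h | h
    · rw [h]
    · rw [h]
      show H (-t) = H t
      exact hHeven t
  have hφnn : ∀ t : ℝ, 0 ≤ t → 0 ≤ φ t := by
    intro t ht
    rcases ht.eq_or_lt with h | h
    · simp [← h, hφ0]
    · exact (hpos t h).le
  have hHmono : MonotoneOn H (Ici (0:ℝ)) := by
    apply monotoneOn_of_deriv_nonneg (convex_Ici 0) hHcont.continuousOn
      (fun x _ => (hHd x).differentiableAt.differentiableWithinAt)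
    intro x hx
    rw [interior_Ici] at hx
    rw [(hHd x).deriv]
    exact hφnn x hx.le
  have hHnn : ∀ t : ℝ, 0 ≤ t → 0 ≤ H t := by
    intro t ht
    have := hHmono (self_mem_Ici) (mem_Ici.mpr ht) ht
    rwa [hH0] at this
  have hHconv : ConvexOn ℝ univ H := by
    apply MonotoneOn.convexOn_of_deriv convex_univ hHcont.continuousOn
      (fun x _ => (hHd x).differentiableAt.differentiableWithinAt)
    intro x _ y _ hxy
    rw [(hHd x).deriv, (hHd y).deriv]
    exact hmono.monotone hxy
  -- The weight `φ u * u ^ (-ap)` is antitone on `(0, ∞)`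
  have hFanti : AntitoneOn (fun u : ℝ => φ u * u ^ (-ap)) (Ioi (0:ℝ)) := by
    apply antitoneOn_of_deriv_nonpos (convex_Ioi 0)
    · exact hcont.continuousOn.mul
        (continuousOn_id.rpow_const fun x hx => Or.inl (ne_of_gt hx))
    · intro x hx
      rw [interior_Ioi] at hx
      exact ((hderiv x hx).mul
        (Real.hasDerivAt_rpow_const (p := -ap) (Or.inl hx.ne'))).differentiableAt.differentiableWithinAt
    · intro x hx
      rw [interior_Ioi] at hx
      have hd : HasDerivAt (fun u : ℝ => φ u * u ^ (-ap))
          (φ' x * x ^ (-ap) + φ x * (-ap * x ^ (-ap - 1))) x :=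
        (hderiv x hx).mul (Real.hasDerivAt_rpow_const (p := -ap) (Or.inl hx.ne'))
      rw [hd.deriv]
      have hφx := hpos x hx
      have h1 : x * φ' x ≤ ap * φ x := by
        have h2 := (hratio x hx).2
        rw [div_le_iff₀ hφx] at h2
        linarith
      have hsub : x ^ (-ap - 1) = x ^ (-ap) / x := by
        rw [Real.rpow_sub hx, Real.rpow_one]
      rw [hsub]
      have key : φ' x * x ^ (-ap) + φ x * (-ap * (x ^ (-ap) / x)) =
          (x * φ' x - ap * φ x) * (x ^ (-ap) / x) := by
        field_simp [(mem_Ioi.mp hx).ne']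
        ring
      rw [key]
      exact mul_nonpos_of_nonpos_of_nonneg (by linarith)
        (div_nonneg (Real.rpow_nonneg hx.le _) hx.le)
  -- scaling bounds for φ and H
  have hφscale : ∀ s l : ℝ, 0 < s → 1 ≤ l → φ (l * s) ≤ l ^ ap * φ s := by
    intro s l hs hl
    have hl0 : (0:ℝ) < l := lt_of_lt_of_le one_pos hl
    have hls : 0 < l * s := mul_pos hl0 hs
    have hmul : (l * s) ^ (-ap) = l ^ (-ap) * s ^ (-ap) := Real.mul_rpow hl0.le hs.le
    have h : φ (l * s) * (l ^ (-ap) * s ^ (-ap)) ≤ φ s * s ^ (-ap) := by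
      have h0 := hFanti (mem_Ioi.mpr hs) (mem_Ioi.mpr hls) (le_mul_of_one_le_left hs.le hl)
      simpa only [hmul] using h0
    have hsp : (0:ℝ) < s ^ (-ap) := Real.rpow_pos_of_pos hs _
    have h2 : (φ (l * s) * l ^ (-ap)) * s ^ (-ap) ≤ φ s * s ^ (-ap) := by
      rw [mul_assoc]; exact h
    have h3 : φ (l * s) * l ^ (-ap) ≤ φ s := le_of_mul_le_mul_right h2 hsp
    have h4 : φ (l * s) = (φ (l * s) * l ^ (-ap)) * l ^ ap := by
      rw [mul_assoc, ← Real.rpow_add hl0]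
      simp
    calc φ (l * s) = (φ (l * s) * l ^ (-ap)) * l ^ ap := h4
      _ ≤ φ s * l ^ ap := mul_le_mul_of_nonneg_right h3 (Real.rpow_nonneg hl0.le _)
      _ = l ^ ap * φ s := mul_comm _ _
  have hHup : ∀ t l : ℝ, 0 ≤ t → 1 ≤ l → H (l * t) ≤ l ^ (ap + 1) * H t := by
    intro t l ht hl
    have hl0 : (0:ℝ) < l := lt_of_lt_of_le one_pos hl
    have hcm := intervalIntegral.integral_comp_mul_left (a := (0:ℝ)) (b := t) (c := l)
      (f := φ) hl0.ne'
    rw [mul_zero, smul_eq_mul] at hcm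
    have hH1 : H (l * t) = l * ∫ x in (0:ℝ)..t, φ (l * x) := by
      rw [hcm, ← mul_assoc, mul_inv_cancel₀ hl0.ne', one_mul]
    have hIle : (∫ x in (0:ℝ)..t, φ (l * x)) ≤ ∫ x in (0:ℝ)..t, l ^ ap * φ x := by
      apply intervalIntegral.integral_mono_on ht
      · exact (hcont.comp (continuous_const.mul continuous_id)).intervalIntegrable _ _
      · exact (hii 0 t).const_mul _
      · intro x hx
        rcases hx.1.eq_or_lt with h | h
        · rw [← h, mul_zero, hφ0, mul_zero]
        · exact hφscale x l h hl
    rw [intervalIntegral.integral_const_mul] at hIle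
    have : H (l * t) ≤ l * (l ^ ap * H t) := by
      rw [hH1]
      exact mul_le_mul_of_nonneg_left hIle hl0.le
    calc H (l * t) ≤ l * (l ^ ap * H t) := this
      _ = l ^ (ap + 1) * H t := by
          rw [Real.rpow_add_one hl0.ne']
          ring
  have hHdown : ∀ t l : ℝ, 0 ≤ t → 1 ≤ l → l * H t ≤ H (l * t) := by
    intro t l ht hl
    have hl0 : (0:ℝ) < l := lt_of_lt_of_le one_pos hl
    have hinv : 0 ≤ 1 - l⁻¹ := by
      have : l⁻¹ ≤ 1 := inv_le_one_of_one_le₀ hl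
      linarith
    have h0 := hHconv.2 (mem_univ (l * t)) (mem_univ (0:ℝ))
      (inv_nonneg.mpr hl0.le) hinv (by ring)
    have harg : l⁻¹ • (l * t) + (1 - l⁻¹) • (0:ℝ) = t := by
      simp only [smul_eq_mul, mul_zero, add_zero]
      field_simp
    rw [harg] at h0
    have h : H t ≤ l⁻¹ * H (l * t) := by
      simpa only [smul_eq_mul, hH0, mul_zero, add_zero] using h0
    calc l * H t ≤ l * (l⁻¹ * H (l * t)) := mul_le_mul_of_nonneg_left h hl0.le
      _ = H (l * t) := by field_simp
  -- integrability
  have hgintH : Integrable (fun x => H |g x|) μ := by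
    have heq : (fun x => Φ |g x|) = fun x => H |g x| := funext fun x => hΦeq _
    rwa [heq] at hgint
  have hgposH : 0 < ∫ x, H |g x| ∂μ := by
    have heq : (fun x => Φ |g x|) = fun x => H |g x| := funext fun x => hΦeq _
    rwa [heq] at hgpos
  have hmeasH : ∀ t : ℝ, AEStronglyMeasurable (fun x => H (t * |g x|)) μ := fun t =>
    (hHcont.measurable.comp (measurable_const.mul hg.abs)).aestronglyMeasurable
  have hΨint : ∀ t : ℝ, 0 ≤ t → Integrable (fun x => H (t * |g x|)) μ := by
    intro t ht
    set C : ℝ := max 1 (t ^ (ap + 1)) with hC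
    have hC1 : (1:ℝ) ≤ C := le_max_left _ _
    refine Integrable.mono (hgintH.const_mul C) (hmeasH t) (.of_forall fun x => ?_)
    have hHx : 0 ≤ H (t * |g x|) := hHnn _ (mul_nonneg ht (abs_nonneg _))
    have hHg : 0 ≤ H |g x| := hHnn _ (abs_nonneg _)
    have hCH : 0 ≤ C * H |g x| := mul_nonneg (by linarith) hHg
    rw [Real.norm_eq_abs, Real.norm_eq_abs, abs_of_nonneg hHx, abs_of_nonneg hCH]
    rcases le_total t 1 with h | h
    · have hle : H (t * |g x|) ≤ H |g x| := by
        apply hHmono (mem_Ici.mpr (mul_nonneg ht (abs_nonneg _))) (mem_Ici.mpr (abs_nonneg _))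
        nlinarith [abs_nonneg (g x)]
      calc H (t * |g x|) ≤ H |g x| := hle
        _ = 1 * H |g x| := (one_mul _).symm
        _ ≤ C * H |g x| := mul_le_mul_of_nonneg_right hC1 hHg
    · calc H (t * |g x|) ≤ t ^ (ap + 1) * H |g x| := hHup |g x| t (abs_nonneg _) h
        _ ≤ C * H |g x| := mul_le_mul_of_nonneg_right (le_max_right _ _) hHg
  -- rewrite σ
  have hσ' : σ = fun t => (∫ x, H (t * |g x|) ∂μ) + (B / (δ - 1)) * t ^ (1 - δ) := by
    funext t
    rw [hσ t]
    simp only [hΦeq]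
  -- convexity of the integral part
  have hIconv : ConvexOn ℝ (Ioi (0:ℝ))
      (fun t => ∫ x, H (t * |g x|) ∂μ) := by
    refine ⟨convex_Ioi _, ?_⟩
    intro a ha b hb ta tb hta htb htab
    have ha0 : 0 ≤ a := (mem_Ioi.mp ha).le
    have hb0 : 0 ≤ b := (mem_Ioi.mp hb).le
    simp only [smul_eq_mul]
    have hmix0 : 0 ≤ ta * a + tb * b := add_nonneg (mul_nonneg hta ha0) (mul_nonneg htb hb0)
    have hpw : ∀ x, H ((ta * a + tb * b) * |g x|) ≤ ta * H (a * |g x|) + tb * H (b * |g x|) := by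
      intro x
      have h := hHconv.2 (mem_univ (a * |g x|)) (mem_univ (b * |g x|)) hta htb htab
      simp only [smul_eq_mul] at h
      have harg : (ta * a + tb * b) * |g x| = ta * (a * |g x|) + tb * (b * |g x|) := by ring
      rw [harg]
      exact h
    calc (∫ x, H ((ta * a + tb * b) * |g x|) ∂μ)
        ≤ ∫ x, (ta * H (a * |g x|) + tb * H (b * |g x|)) ∂μ := by
          apply integral_mono (hΨint _ hmix0) ?_ hpw
          exact ((hΨint a ha0).const_mul ta).add ((hΨint b hb0).const_mul tb)
      _ = ta * (∫ x, H (a * |g x|) ∂μ) + tb * (∫ x, H (b * |g x|) ∂μ) := by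
          rw [integral_add ((hΨint a ha0).const_mul ta) ((hΨint b hb0).const_mul tb),
            integral_const_mul, integral_const_mul]
  -- strict convexity of the power part
  have hp' : (1 - δ) - 1 < 0 := by linarith
  have hPs : StrictConvexOn ℝ (Ioi (0:ℝ)) (fun t : ℝ => (B / (δ - 1)) * t ^ (1 - δ)) := by
    apply StrictMonoOn.strictConvexOn_of_deriv (convex_Ioi 0)
    · exact continuousOn_const.mul
        (continuousOn_id.rpow_const fun x hx => Or.inl (ne_of_gt hx))
    · rw [interior_Ioi]
      intro x hx y hy hxy
      have hdx : HasDerivAt (fun t : ℝ => (B / (δ - 1)) * t ^ (1 - δ))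
          ((B / (δ - 1)) * ((1 - δ) * x ^ ((1 - δ) - 1))) x :=
        (Real.hasDerivAt_rpow_const (p := 1 - δ) (Or.inl (ne_of_gt hx))).const_mul _
      have hdy : HasDerivAt (fun t : ℝ => (B / (δ - 1)) * t ^ (1 - δ))
          ((B / (δ - 1)) * ((1 - δ) * y ^ ((1 - δ) - 1))) y :=
        (Real.hasDerivAt_rpow_const (p := 1 - δ) (Or.inl (ne_of_gt hy))).const_mul _
      rw [hdx.deriv, hdy.deriv]
      have h1 : y ^ ((1 - δ) - 1) < x ^ ((1 - δ) - 1) :=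
        (Real.rpow_lt_rpow_iff_of_neg hy hx hp').mpr hxy
      have h2 : (1 - δ) * x ^ ((1 - δ) - 1) < (1 - δ) * y ^ ((1 - δ) - 1) :=
        mul_lt_mul_of_neg_left h1 (by linarith)
      exact mul_lt_mul_of_pos_left h2 hc
  -- strict convexity of σ
  have hσconv : StrictConvexOn ℝ (Ioi (0:ℝ)) σ := by
    rw [hσ']
    exact hIconv.add_strictConvexOn hPs
  -- tendsto at 0⁺
  have hT0 : Tendsto σ (𝓝[>] (0:ℝ)) atTop := by
    have h1 : Tendsto (fun t : ℝ => (t⁻¹) ^ (δ - 1)) (𝓝[>] (0:ℝ)) atTop :=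
      (tendsto_rpow_atTop hδ1).comp tendsto_inv_nhdsGT_zero
    have h2 : Tendsto (fun t : ℝ => t ^ (1 - δ)) (𝓝[>] (0:ℝ)) atTop := by
      apply h1.congr'
      filter_upwards [self_mem_nhdsWithin] with t ht
      have ht0 : (0:ℝ) < t := ht
      show (t⁻¹) ^ (δ - 1) = t ^ (1 - δ)
      rw [Real.inv_rpow ht0.le, ← Real.rpow_neg ht0.le, show -(δ - 1) = 1 - δ by ring]
    have h3 : Tendsto (fun t : ℝ => (B / (δ - 1)) * t ^ (1 - δ)) (𝓝[>] (0:ℝ)) atTop :=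
      h2.const_mul_atTop hc
    apply tendsto_atTop_mono' _ ?_ h3
    filter_upwards [self_mem_nhdsWithin] with t ht
    have ht0 : (0:ℝ) < t := ht
    have hnn : 0 ≤ ∫ x, Φ (t * |g x|) ∂μ := by
      apply integral_nonneg
      intro x
      show 0 ≤ Φ (t * |g x|)
      rw [hΦeq]
      exact hHnn _ (mul_nonneg ht0.le (abs_nonneg _))
    rw [hσ t]
    linarith
  -- tendsto at ∞
  have hTtop : Tendsto σ atTop atTop := by
    have hbase : Tendsto (fun t : ℝ => t * ∫ x, H |g x| ∂μ) atTop atTop :=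
      tendsto_id.atTop_mul_const hgposH
    apply tendsto_atTop_mono' _ ?_ hbase
    filter_upwards [eventually_ge_atTop (1:ℝ)] with t ht
    have ht0 : (0:ℝ) < t := lt_of_lt_of_le one_pos ht
    have h1 : t * ∫ x, H |g x| ∂μ ≤ ∫ x, H (t * |g x|) ∂μ := by
      rw [← integral_const_mul]
      apply integral_mono (hgintH.const_mul t) (hΨint t ht0.le)
      intro x
      exact hHdown |g x| t (abs_nonneg _) ht
    have h2 : 0 ≤ (B / (δ - 1)) * t ^ (1 - δ) :=
      mul_nonneg hc.le (Real.rpow_nonneg ht0.le _)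
    rw [hσ t]
    simp only [hΦeq]
    linarith
  -- existence and uniqueness of the minimizer
  have hσcont : ContinuousOn σ (Ioi (0:ℝ)) := hσconv.convexOn.continuousOn isOpen_Ioi
  obtain ⟨a, haI, ha⟩ :=
    mem_nhdsGT_iff_exists_Ioo_subset.mp (hT0.eventually_gt_atTop (σ 1))
  obtain ⟨b, hb⟩ := eventually_atTop.mp (hTtop.eventually_gt_atTop (σ 1))
  have ha0 : (0:ℝ) < a := haI
  set lo : ℝ := min (a / 2) 1 with hlodef
  set hi : ℝ := max b 1 with hhidef
  have hlo0 : 0 < lo := lt_min (half_pos ha0) one_pos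
  have hlo1 : lo ≤ 1 := min_le_right _ _
  have hhi1 : (1:ℝ) ≤ hi := le_max_right _ _
  have hK : Icc lo hi ⊆ Ioi (0:ℝ) := fun t htK => lt_of_lt_of_le hlo0 htK.1
  obtain ⟨tstar, htsK, htsmin⟩ :=
    isCompact_Icc.exists_isMinOn ⟨1, hlo1, hhi1⟩ (hσcont.mono hK)
  have hts0 : 0 < tstar := hK htsK
  have h1K : (1:ℝ) ∈ Icc lo hi := ⟨hlo1, hhi1⟩
  have hmin1 : σ tstar ≤ σ 1 := isMinOn_iff.mp htsmin 1 h1K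
  have hglobal : ∀ t : ℝ, 0 < t → σ tstar ≤ σ t := by
    intro t ht
    rcases lt_or_ge t lo with h | h
    · have hta : t < a := by
        have h1 : lo ≤ a / 2 := min_le_left _ _
        linarith
      have : σ 1 < σ t := ha ⟨ht, hta⟩
      linarith
    · rcases le_or_gt t hi with h2 | h2
      · exact isMinOn_iff.mp htsmin t ⟨h, h2⟩
      · have : σ 1 < σ t := hb t (le_of_lt (lt_of_le_of_lt (le_max_left b 1) h2))
        linarith
  refine ⟨hσconv, hT0, hTtop, tstar, ⟨hts0, hglobal⟩, ?_⟩
  rintro y ⟨hy0, hymin⟩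
  by_contra hne
  have h1 : σ tstar ≤ σ y := hglobal y hy0
  have h2 : σ y ≤ σ tstar := hymin tstar hts0
  have hmid := hσconv.2 (mem_Ioi.mpr hy0) (mem_Ioi.mpr hts0) hne
    (by norm_num : (0:ℝ) < 1 / 2) (by norm_num : (0:ℝ) < 1 / 2) (by norm_num)
  simp only [smul_eq_mul] at hmid
  have hmidpos : 0 < (1 / 2 : ℝ) * y + (1 / 2 : ℝ) * tstar := by linarith
  have := hglobal _ hmidpos
  linarith
end

section
/- There exists a unique t_* > 0 such that ∫_Ω φ(t_*|g|)·|g| dμ = B·t_*^{−δ}; moreover, for every t ≥ t_* one has ∫_Ω φ(t|g|)·|g| dμ ≥ B·t^{−δ} (abstract form of the paper's Lemma 4.1: the Nehari-type sets 𝒩* and 𝒩 are nonempty and 𝒩 contains the whole ray {t·g : t ≥ t_*}). -/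
open MeasureTheory Set Filter Topology Real

/-- (Abstract form of Lemma 4.1: the Nehari-type sets `𝒩*` and `𝒩`
are nonempty.)  Under hypotheses (φ0)–(φ1), for measurable `g` with
`0 < ∫ Φ(|g|) dμ < ∞` and constants `B > 0`, `δ > 1`, there exists a unique
`t⋆ > 0` with `∫ φ(t⋆|g|)·|g| dμ = B · t⋆^(-δ)`, and moreover
`∫ φ(t|g|)·|g| dμ ≥ B · t^(-δ)` for every `t ≥ t⋆`.
Here `Φ t = ∫ s in 0..|t|, φ s` and `a₋, a₊` are written `am, ap`. -/
theorem existsUnique_nehari_point_and_ray_in_nehari_set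
    {Ω : Type*} [MeasurableSpace Ω] (μ : Measure Ω)
    (φ φ' : ℝ → ℝ) (am ap : ℝ)
    (hodd : ∀ t : ℝ, φ (-t) = -φ t)
    (hmono : StrictMono φ)
    (hcont : Continuous φ)
    (hsurj : Function.Surjective φ)
    (hpos : ∀ t : ℝ, 0 < t → 0 < φ t)
    (hderiv : ∀ t : ℝ, 0 < t → HasDerivAt φ (φ' t) t)
    (ham : 0 < am) (hamap : am ≤ ap)
    (hratio : ∀ t : ℝ, 0 < t → am ≤ t * φ' t / φ t ∧ t * φ' t / φ t ≤ ap)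
    (Φ : ℝ → ℝ) (hΦ : ∀ t : ℝ, Φ t = ∫ s in (0:ℝ)..|t|, φ s)
    (g : Ω → ℝ) (hg : Measurable g)
    (hgint : Integrable (fun x => Φ |g x|) μ)
    (hgpos : 0 < ∫ x, Φ |g x| ∂μ)
    (B δ : ℝ) (hB : 0 < B) (hδ : 1 < δ) :
    ∃ tstar : ℝ, 0 < tstar ∧
      (∫ x, φ (tstar * |g x|) * |g x| ∂μ) = B * tstar ^ (-δ) ∧
      (∀ t : ℝ, 0 < t → (∫ x, φ (t * |g x|) * |g x| ∂μ) = B * t ^ (-δ) → t = tstar) ∧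
      (∀ t : ℝ, tstar ≤ t → B * t ^ (-δ) ≤ ∫ x, φ (t * |g x|) * |g x| ∂μ) := by
  
  have hap : 0 < ap := lt_of_lt_of_le ham hamap
  have hq1 : 0 < ap + 1 := by linarith
  have hφ0 : φ 0 = 0 := by have h := hodd 0; simp at h; linarith
  have hφnn : ∀ s : ℝ, 0 ≤ s → 0 ≤ φ s := by
    intro s hs
    rcases eq_or_lt_of_le hs with h | h
    · simp [← h, hφ0]
    · exact (hpos s h).le
  set P : ℝ → ℝ := fun t => ∫ s in (0:ℝ)..t, φ s with hPdef
  have hΦP : ∀ t : ℝ, 0 ≤ t → Φ t = P t := fun t ht => by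
    rw [hΦ, abs_of_nonneg ht]
  have hΦ0 : Φ 0 = 0 := by simp [hΦ]
  have hPderiv : ∀ t : ℝ, HasDerivAt P (φ t) t := fun t =>
    intervalIntegral.integral_hasDerivAt_right (hcont.intervalIntegrable _ _)
      hcont.aestronglyMeasurable.stronglyMeasurableAtFilter hcont.continuousAt
  have hΦderiv : ∀ t : ℝ, 0 < t → HasDerivAt Φ (φ t) t := by
    intro t ht
    apply (hPderiv t).congr_of_eventuallyEq
    filter_upwards [eventually_gt_nhds ht] with s hs
    exact hΦP s hs.le
  have hPcont : Continuous P :=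
    intervalIntegral.continuous_primitive (fun a b => hcont.intervalIntegrable a b) 0
  have hΦcont : Continuous Φ := by
    have h : Φ = fun t => P |t| := funext fun t => hΦ t
    rw [h]; exact hPcont.comp continuous_abs
  have hΦmono : ∀ a b : ℝ, 0 ≤ a → a ≤ b → Φ a ≤ Φ b := by
    intro a b ha hab
    rw [hΦP a ha, hΦP b (ha.trans hab)]
    have hadd := intervalIntegral.integral_add_adjacent_intervals
      (hcont.intervalIntegrable 0 a : IntervalIntegrable φ volume 0 a)
      (hcont.intervalIntegrable a b : IntervalIntegrable φ volume a b)
    have hnn : 0 ≤ ∫ s in a..b, φ s :=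
      intervalIntegral.integral_nonneg hab (fun u hu => hφnn u (ha.trans hu.1))
    simp only [hPdef]
    linarith [hadd]
  have hΦnn : ∀ s : ℝ, 0 ≤ s → 0 ≤ Φ s := by
    intro s hs
    have := hΦmono 0 s le_rfl hs
    linarith [hΦ0]
  have key1 : ∀ s : ℝ, 0 ≤ s → s * φ s ≤ (ap + 1) * Φ s := by
    intro s hs
    rcases eq_or_lt_of_le hs with h | h
    · simp [← h, hΦ0]
    · set ψ : ℝ → ℝ := fun u => (ap + 1) * Φ u - u * φ u with hψdef
      have hψd : ∀ u : ℝ, 0 < u →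
          HasDerivAt ψ ((ap + 1) * φ u - (1 * φ u + u * φ' u)) u := by
        intro u hu
        exact ((hΦderiv u hu).const_mul (ap + 1)).sub
          ((hasDerivAt_id u).mul (hderiv u hu))
      have hψmono : MonotoneOn ψ (Ici (0:ℝ)) := by
        apply monotoneOn_of_deriv_nonneg (convex_Ici 0)
        · exact ((continuous_const.mul hΦcont).sub (continuous_id.mul hcont)).continuousOn
        · intro u hu
          rw [interior_Ici] at hu
          exact ((hψd u hu).differentiableAt).differentiableWithinAt
        · intro u hu
          rw [interior_Ici] at hu
          rw [(hψd u hu).deriv]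
          have hφu := hpos u hu
          have hr := (hratio u hu).2
          rw [div_le_iff₀ hφu] at hr
          nlinarith
      have hmono0 := hψmono (self_mem_Ici) (mem_Ici.2 hs) hs
      simp only [hψdef, hΦ0] at hmono0
      simp [hφ0] at hmono0
      linarith
  have key2 : ∀ l s : ℝ, 1 ≤ l → 0 ≤ s → Φ (l * s) ≤ l ^ (ap + 1) * Φ s := by
    intro l s hl hs
    have hl0 : 0 < l := lt_of_lt_of_le one_pos hl
    rcases eq_or_lt_of_le hs with h | h
    · rw [← h]; simp [hΦ0]
    · set G : ℝ → ℝ := fun u => Φ (u * s) * u ^ (-(ap + 1)) with hGdef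
      have hGd : ∀ u : ℝ, 0 < u → HasDerivAt G
          (φ (u * s) * s * u ^ (-(ap + 1)) + Φ (u * s) * (-(ap + 1) * u ^ (-(ap + 1) - 1))) u := by
        intro u hu
        have h1 : HasDerivAt (fun v : ℝ => Φ (v * s)) (φ (u * s) * s) u := by
          have := (hΦderiv (u * s) (mul_pos hu h)).comp u ((hasDerivAt_id u).mul_const s)
          simpa [Function.comp_def] using this
        have h2 : HasDerivAt (fun v : ℝ => v ^ (-(ap + 1))) (-(ap + 1) * u ^ (-(ap + 1) - 1)) u :=
          Real.hasDerivAt_rpow_const (Or.inl hu.ne')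
        exact h1.mul h2
      have hGanti : AntitoneOn G (Ici (1:ℝ)) := by
        apply antitoneOn_of_deriv_nonpos (convex_Ici 1)
        · apply ContinuousOn.mul
          · exact (hΦcont.comp (continuous_id.mul continuous_const)).continuousOn
          · intro u hu
            have hu0 : (0:ℝ) < u := lt_of_lt_of_le one_pos hu
            exact (Real.continuousAt_rpow_const u _ (Or.inl hu0.ne')).continuousWithinAt
        · intro u hu
          rw [interior_Ici] at hu
          exact ((hGd u (lt_trans one_pos hu)).differentiableAt).differentiableWithinAt
        · intro u hu
          rw [interior_Ici] at hu
          have hu0 : 0 < u := lt_trans one_pos hu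
          rw [(hGd u hu0).deriv]
          have hk := key1 (u * s) (mul_nonneg hu0.le hs)
          have hA : 0 < u ^ (-(ap + 1) - 1) := Real.rpow_pos_of_pos hu0 _
          have hrw : u ^ (-(ap + 1)) = u * u ^ (-(ap + 1) - 1) := by
            have h' := Real.rpow_add hu0 1 (-(ap + 1) - 1)
            rw [Real.rpow_one, show (1:ℝ) + (-(ap + 1) - 1) = -(ap + 1) by ring] at h'
            exact h'
          rw [hrw]
          have hΦus : 0 ≤ Φ (u * s) := hΦnn _ (mul_nonneg hu0.le hs)
          nlinarith [mul_le_mul_of_nonneg_right hk hA.le]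
      have hle := hGanti (self_mem_Ici) (mem_Ici.2 hl) hl
      simp only [hGdef, one_mul, Real.one_rpow, mul_one] at hle
      have hlq : 0 < l ^ (ap + 1) := Real.rpow_pos_of_pos hl0 _
      rw [Real.rpow_neg hl0.le, ← div_eq_mul_inv, div_le_iff₀ hlq] at hle
      linarith [hle]
  have hlow : ∀ s : ℝ, 0 ≤ s → Φ s ≤ s * φ s := by
    intro s hs
    rw [hΦP s hs]
    have hle : (∫ u in (0:ℝ)..s, φ u) ≤ ∫ u in (0:ℝ)..s, φ s :=
      intervalIntegral.integral_mono_on hs (hcont.intervalIntegrable _ _)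
        intervalIntegrable_const (fun u hu => hmono.monotone hu.2)
    have hc : (∫ u in (0:ℝ)..s, φ s) = s * φ s := by
      simp [intervalIntegral.integral_const]
    simp only [hPdef]
    linarith
  have hmeas_h : ∀ t : ℝ, AEStronglyMeasurable (fun x => φ (t * |g x|) * |g x|) μ :=
    fun t => ((hcont.measurable.comp (measurable_const.mul hg.abs)).mul hg.abs).aestronglyMeasurable
  have hint : ∀ t : ℝ, 0 < t → Integrable (fun x => φ (t * |g x|) * |g x|) μ := by
    intro t ht
    have hM : 0 < (max t 1) ^ (ap + 1) :=
      Real.rpow_pos_of_pos (lt_of_lt_of_le one_pos (le_max_right t 1)) _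
    apply Integrable.mono' (hgint.const_mul ((ap + 1) / t * (max t 1) ^ (ap + 1))) (hmeas_h t)
    filter_upwards with x
    set s := |g x| with hsdef
    have hs : 0 ≤ s := abs_nonneg _
    have h1 : 0 ≤ φ (t * s) * s := mul_nonneg (hφnn _ (mul_nonneg ht.le hs)) hs
    rw [Real.norm_of_nonneg h1]
    have h2 := key1 (t * s) (mul_nonneg ht.le hs)
    have h3 : Φ (t * s) ≤ (max t 1) ^ (ap + 1) * Φ s := by
      refine le_trans (hΦmono (t * s) ((max t 1) * s) (mul_nonneg ht.le hs)
        (mul_le_mul_of_nonneg_right (le_max_left t 1) hs)) ?_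
      exact key2 (max t 1) s (le_max_right t 1) hs
    rw [div_mul_eq_mul_div, div_mul_eq_mul_div, le_div_iff₀ ht]
    nlinarith [mul_le_mul_of_nonneg_left h3 hq1.le]
  have Fmono : ∀ t1 t2 : ℝ, 0 < t1 → t1 ≤ t2 →
      (∫ x, φ (t1 * |g x|) * |g x| ∂μ) ≤ ∫ x, φ (t2 * |g x|) * |g x| ∂μ := by
    intro t1 t2 h1 h12
    apply integral_mono (hint t1 h1) (hint t2 (lt_of_lt_of_le h1 h12))
    intro x
    exact mul_le_mul_of_nonneg_right
      (hmono.monotone (mul_le_mul_of_nonneg_right h12 (abs_nonneg _))) (abs_nonneg _)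
  have hF1 : (0:ℝ) < ∫ x, φ (1 * |g x|) * |g x| ∂μ := by
    refine lt_of_lt_of_le hgpos (integral_mono hgint (hint 1 one_pos) (fun x => ?_))
    have := hlow |g x| (abs_nonneg _)
    simpa [mul_comm] using this
  set F : ℝ → ℝ := fun t => ∫ x, φ (t * |g x|) * |g x| ∂μ with hFdef
  have Fcont : ∀ a b : ℝ, 0 < a → a ≤ b → ContinuousOn F (Icc a b) := by
    intro a b ha hab
    refine continuousOn_of_dominated (fun t _ => hmeas_h t)
      (fun t ht => ?_) (hint b (lt_of_lt_of_le ha hab)) ?_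
    · filter_upwards with x
      have hs : (0:ℝ) ≤ |g x| := abs_nonneg _
      have h1 : 0 ≤ φ (t * |g x|) * |g x| :=
        mul_nonneg (hφnn _ (mul_nonneg (lt_of_lt_of_le ha ht.1).le hs)) hs
      rw [Real.norm_of_nonneg h1]
      exact mul_le_mul_of_nonneg_right
        (hmono.monotone (mul_le_mul_of_nonneg_right ht.2 hs)) hs
    · filter_upwards with x
      exact ((hcont.comp (continuous_id.mul continuous_const)).mul continuous_const).continuousOn
  -- choose endpoints for IVT
  set R : ℝ := (B / F 1) ^ (1 / δ) with hRdef
  have hR0 : 0 < R := Real.rpow_pos_of_pos (div_pos hB hF1) _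
  have hδ0 : (0:ℝ) < δ := lt_trans one_pos hδ
  have hRδ : R ^ δ = B / F 1 := by
    rw [hRdef, ← Real.rpow_mul (div_pos hB hF1).le, one_div,
      inv_mul_cancel₀ (ne_of_gt hδ0), Real.rpow_one]
  set ε : ℝ := min 1 R with hεdef
  set T : ℝ := max 1 R with hTdef
  have hε0 : 0 < ε := lt_min one_pos hR0
  have hεT : ε ≤ T := le_trans (min_le_left _ _) (le_max_left _ _)
  have hT1 : (1:ℝ) ≤ T := le_max_left _ _
  have hε1 : ε ≤ 1 := min_le_left _ _
  set H : ℝ → ℝ := fun t => F t * t ^ δ with hHdef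
  have hHεB : H ε ≤ B := by
    have h1 : F ε ≤ F 1 := Fmono ε 1 hε0 hε1
    have h2 : ε ^ δ ≤ B / F 1 := by
      rw [← hRδ]
      exact Real.rpow_le_rpow hε0.le (min_le_right _ _) hδ0.le
    calc F ε * ε ^ δ ≤ F 1 * (B / F 1) :=
          mul_le_mul h1 h2 (Real.rpow_nonneg hε0.le _) hF1.le
      _ = B := mul_div_cancel₀ B hF1.ne'
  have hHTB : B ≤ H T := by
    have h1 : F 1 ≤ F T := Fmono 1 T one_pos hT1
    have h2 : B / F 1 ≤ T ^ δ := by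
      rw [← hRδ]
      exact Real.rpow_le_rpow hR0.le (le_max_right _ _) hδ0.le
    calc B = F 1 * (B / F 1) := (mul_div_cancel₀ B hF1.ne').symm
      _ ≤ F T * T ^ δ :=
          mul_le_mul h1 h2 (div_nonneg hB.le hF1.le) (lt_of_lt_of_le hF1 h1).le
  have hHcont : ContinuousOn H (Icc ε T) :=
    (Fcont ε T hε0 hεT).mul
      ((continuous_id.rpow_const (fun x => Or.inr hδ0.le)).continuousOn)
  have hmem : B ∈ Icc (H ε) (H T) := ⟨hHεB, hHTB⟩
  obtain ⟨tstar, htmem, htEq⟩ := intermediate_value_Icc hεT hHcont hmem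
  have htpos : 0 < tstar := lt_of_lt_of_le hε0 htmem.1
  have htδpos : 0 < tstar ^ δ := Real.rpow_pos_of_pos htpos _
  have hFeq : F tstar = B * tstar ^ (-δ) := by
    rw [Real.rpow_neg htpos.le, ← htEq, hHdef]
    field_simp
  -- antitonicity of t ↦ t ^ (-δ)
  have hanti : ∀ t1 t2 : ℝ, 0 < t1 → t1 ≤ t2 → t2 ^ (-δ) ≤ t1 ^ (-δ) := by
    intro t1 t2 h1 h12
    rw [Real.rpow_neg h1.le, Real.rpow_neg (lt_of_lt_of_le h1 h12).le]
    exact inv_anti₀ (Real.rpow_pos_of_pos h1 _)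
      (Real.rpow_le_rpow h1.le h12 hδ0.le)
  have hanti' : ∀ t1 t2 : ℝ, 0 < t1 → t1 < t2 → t2 ^ (-δ) < t1 ^ (-δ) := by
    intro t1 t2 h1 h12
    rw [Real.rpow_neg h1.le, Real.rpow_neg (lt_trans h1 h12).le]
    exact inv_strictAnti₀ (Real.rpow_pos_of_pos h1 _)
      (Real.rpow_lt_rpow h1.le h12 hδ0)
  refine ⟨tstar, htpos, hFeq, ?_, ?_⟩
  · intro t ht hteq
    rcases lt_trichotomy t tstar with h | h | h
    · exfalso
      have h1 : F t ≤ F tstar := Fmono t tstar ht h.le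
      have h2 : tstar ^ (-δ) < t ^ (-δ) := hanti' t tstar ht h
      have h3 : B * tstar ^ (-δ) < B * t ^ (-δ) := by
        exact mul_lt_mul_of_pos_left h2 hB
      rw [← hteq, ← hFeq] at h3
      linarith
    · exact h
    · exfalso
      have h1 : F tstar ≤ F t := Fmono tstar t htpos h.le
      have h2 : t ^ (-δ) < tstar ^ (-δ) := hanti' tstar t htpos h
      have h3 : B * t ^ (-δ) < B * tstar ^ (-δ) := mul_lt_mul_of_pos_left h2 hB
      rw [← hteq, ← hFeq] at h3
      linarith
  · intro t ht
    have h1 : F tstar ≤ F t := Fmono tstar t htpos ht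
    have h2 : t ^ (-δ) ≤ tstar ^ (-δ) := hanti tstar t htpos ht
    have h3 : B * t ^ (-δ) ≤ B * tstar ^ (-δ) := mul_le_mul_of_nonneg_left h2 hB.le
    calc B * t ^ (-δ) ≤ B * tstar ^ (-δ) := h3
      _ = F tstar := hFeq.symm
      _ ≤ F t := h1
end
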